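/- Let A and B be finite posets and let g : A → B and f : B → A be order-preserving maps forming a Galois connection g ⊣ f. Then for every b ∈ A, c_A(b) = Σ_{b' ∈ B with f(b') = b} c_B(b'). -/
import Mathlib


-- `μ` is the Möbius function of the finite poset `P`: `μ x y` (for `y ≤ x`) is the unique
-- integer-valued function such that `μ x y = 0` whenever `¬ y ≤ x`, and for all `c ≤ a`,
-- `∑_{b : c ≤ b ≤ a} μ b c = δ_{a,c}` and `∑_{b : c ≤ b ≤ a} μ a b = δ_{a,c}`.
open Classical in
def IsMobiusFn {P : Type*} [PartialOrder P] [Fintype P] (μ : P → P → ℤ) : Prop :=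
  (∀ x y : P, ¬ y ≤ x → μ x y = 0) ∧
  (∀ a c : P, c ≤ a →
    (∑ b ∈ Finset.univ.filter (fun b => c ≤ b ∧ b ≤ a), μ b c) = if a = c then 1 else 0) ∧
  (∀ a c : P, c ≤ a →
    (∑ b ∈ Finset.univ.filter (fun b => c ≤ b ∧ b ≤ a), μ a b) = if a = c then 1 else 0)

-- `c_P(x) = ∑_{y ∈ P, y ≥ x} μ_P(y, x)`.
open Classical in
noncomputable def coefCFn {P : Type*} [PartialOrder P] [Fintype P] (μ : P → P → ℤ) (x : P) : ℤ :=
  ∑ y ∈ Finset.univ.filter (fun y => x ≤ y), μ y x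

open Classical in
-- Let `A` and `B` be finite posets and `g : A → B`, `f : B → A` order-preserving maps
-- forming a Galois connection `g ⊣ f`.  Then for every `b ∈ A`,
-- `c_A(b) = ∑_{b' ∈ B, f b' = b} c_B(b')`.
theorem stmt1 {A B : Type*} [PartialOrder A] [Fintype A] [PartialOrder B] [Fintype B]
    (g : A → B) (f : B → A) (hg : Monotone g) (hf : Monotone f)
    (hgal : ∀ (a : A) (b : B), g a ≤ b ↔ a ≤ f b)
    (μA : A → A → ℤ) (hμA : IsMobiusFn μA)
    (μB : B → B → ℤ) (hμB : IsMobiusFn μB)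
    (b : A) :
    coefCFn μA b = ∑ b' ∈ Finset.univ.filter (fun b' : B => f b' = b), coefCFn μB b' := by
  classical
  obtain ⟨hA0, hA1, hA2⟩ := hμA
  obtain ⟨hB0, hB1, hB2⟩ := hμB
  have key1 : ∀ b' : B, (if f b' = b then (1:ℤ) else 0) =
      ∑ a ∈ Finset.univ, if b ≤ a ∧ a ≤ f b' then μA a b else 0 := by
    intro b'
    rw [← Finset.sum_filter]
    by_cases h : b ≤ f b'
    · exact (hA1 (f b') b h).symm
    · rw [Finset.sum_eq_zero, if_neg]
      · intro he; exact h (he ▸ le_rfl)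
      · intro a ha
        simp only [Finset.mem_filter] at ha
        exact absurd (ha.2.1.trans ha.2.2) h
  have key2 : ∀ (a : A) (y : B),
      (∑ b' ∈ Finset.univ, if g a ≤ b' ∧ b' ≤ y then μB y b' else 0) =
      if y = g a then (1:ℤ) else 0 := by
    intro a y
    rw [← Finset.sum_filter]
    by_cases h : g a ≤ y
    · exact hB2 y (g a) h
    · rw [Finset.sum_eq_zero, if_neg]
      · intro he; exact h (he ▸ le_rfl)
      · intro b' hb'
        simp only [Finset.mem_filter] at hb'
        exact absurd (hb'.2.1.trans hb'.2.2) h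
  calc coefCFn μA b
      = ∑ a ∈ Finset.univ, if b ≤ a then μA a b else 0 := by
        rw [coefCFn, Finset.sum_filter]
    _ = ∑ a ∈ Finset.univ, ∑ y ∈ Finset.univ,
          (if b ≤ a then μA a b else 0) * (if y = g a then 1 else 0) := by
        refine Finset.sum_congr rfl fun a _ => ?_
        simp [mul_ite, Finset.sum_ite_eq']
    _ = ∑ a ∈ Finset.univ, ∑ y ∈ Finset.univ, (if b ≤ a then μA a b else 0) *
          ∑ b' ∈ Finset.univ, (if g a ≤ b' ∧ b' ≤ y then μB y b' else 0) := by
        refine Finset.sum_congr rfl fun a _ => Finset.sum_congr rfl fun y _ => ?_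
        rw [key2]
    _ = ∑ a ∈ Finset.univ, ∑ y ∈ Finset.univ, ∑ b' ∈ Finset.univ,
          (if b ≤ a ∧ a ≤ f b' then μA a b else 0) * (if b' ≤ y then μB y b' else 0) := by
        refine Finset.sum_congr rfl fun a _ => Finset.sum_congr rfl fun y _ => ?_
        rw [Finset.mul_sum]
        refine Finset.sum_congr rfl fun b' _ => ?_
        by_cases h1 : b ≤ a <;> by_cases h2 : g a ≤ b' <;> by_cases h3 : b' ≤ y <;>
          simp [h1, h2, h3, (hgal a b').symm, (hgal a b'), mul_comm]
    _ = ∑ b' ∈ Finset.univ, ∑ a ∈ Finset.univ, ∑ y ∈ Finset.univ,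
          (if b ≤ a ∧ a ≤ f b' then μA a b else 0) * (if b' ≤ y then μB y b' else 0) := by
        rw [show (∑ a ∈ Finset.univ, ∑ y ∈ Finset.univ, ∑ b' ∈ Finset.univ,
            (if b ≤ a ∧ a ≤ f b' then μA a b else 0) * (if b' ≤ y then μB y b' else 0)) =
            ∑ a ∈ Finset.univ, ∑ b' ∈ Finset.univ, ∑ y ∈ Finset.univ,
            (if b ≤ a ∧ a ≤ f b' then μA a b else 0) * (if b' ≤ y then μB y b' else 0)
          from Finset.sum_congr rfl fun a _ => Finset.sum_comm]
        exact Finset.sum_comm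
    _ = ∑ b' ∈ Finset.univ, (if f b' = b then (1:ℤ) else 0) * coefCFn μB b' := by
        refine Finset.sum_congr rfl fun b' _ => ?_
        rw [key1, coefCFn, Finset.sum_filter, ← Finset.sum_mul_sum]
    _ = ∑ b' ∈ Finset.univ.filter (fun b' : B => f b' = b), coefCFn μB b' := by
        rw [Finset.sum_filter]
        refine Finset.sum_congr rfl fun b' _ => ?_
        by_cases h : f b' = b <;> simp [h]
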